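/- For every q ∈ (0,8), the open square D = {z ∈ ℂ : 0 < Re z < 1 and |Im z| < min(Re z, 1 − Re z)} is covered by Ω_q ∪ Ω_q', where Ω_q' = {1/2 + i(z − 1/2) : z ∈ Ω_q} is the image of Ω_q under the rotation of center 1/2 and angle π/2. -/
import Mathlib


open Set Metric

/-- The domain `Ω = ⋃_{0<x≤1/2} B(x, x/√2) ∪ ⋃_{1/2<x<1} B(x, (1-x)/√2)`. -/
def Omega : Set ℂ :=
  (⋃ x ∈ Ioc (0 : ℝ) (1 / 2), ball (x : ℂ) (x / Real.sqrt 2)) ∪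
    ⋃ x ∈ Ioo (1 / 2 : ℝ) 1, ball (x : ℂ) ((1 - x) / Real.sqrt 2)

/-- The open ellipse `Ell_q = {z : q(Re z - 1/2)² + (16-q)(Im z)² < 1}`. -/
def EllQ (q : ℝ) : Set ℂ :=
  {z : ℂ | q * (z.re - 1 / 2) ^ 2 + (16 - q) * z.im ^ 2 < 1}

/-- The domain `Ω_q = (Ω ∩ {Re z < 1/4 ∨ Re z > 3/4}) ∪ (Ω ∩ Ell_q)`. -/
def OmegaQ (q : ℝ) : Set ℂ :=
  (Omega ∩ {z : ℂ | z.re < 1 / 4 ∨ 3 / 4 < z.re}) ∪ (Omega ∩ EllQ q)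

/-- The open square `D` with vertices `0`, `1/2 + i/2`, `1`, `1/2 - i/2`. -/
def SquareD : Set ℂ := {z : ℂ | 0 < z.re ∧ z.re < 1 ∧ |z.im| < min z.re (1 - z.re)}

lemma mem_ball_of_sq {z : ℂ} {x r : ℝ} (hr : 0 < r) (h : (z.re - x)^2 + z.im^2 < r^2) :
    z ∈ ball (x : ℂ) r := by
  rw [mem_ball, Complex.dist_eq_re_im]
  rw [Real.sqrt_lt' hr]
  simpa using h

lemma mem_Omega_left {z : ℂ} {x : ℝ} (hx0 : 0 < x) (hx : x ≤ 1/2)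
    (h : (z.re - x)^2 + z.im^2 < x^2/2) : z ∈ Omega := by
  refine Or.inl (mem_iUnion₂.mpr ⟨x, ⟨hx0, hx⟩, mem_ball_of_sq (by positivity) ?_⟩)
  rw [div_pow, Real.sq_sqrt (by norm_num : (0:ℝ) ≤ 2)]
  exact h

lemma mem_Omega_right {z : ℂ} {x : ℝ} (hx0 : 1/2 < x) (hx : x < 1)
    (h : (z.re - x)^2 + z.im^2 < (1-x)^2/2) : z ∈ Omega := by
  refine Or.inr (mem_iUnion₂.mpr ⟨x, ⟨hx0, hx⟩,
    mem_ball_of_sq (div_pos (by linarith) (Real.sqrt_pos.mpr (by norm_num))) ?_⟩)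
  rw [div_pow, Real.sq_sqrt (by norm_num : (0:ℝ) ≤ 2)]
  exact h

set_option maxHeartbeats 1000000 in
/-- For `q ∈ (0,8)`, the square `D` is covered by `Ω_q` together with its rotation by `π/2`
around the center `1/2`. -/
theorem squareD_subset_union (q : ℝ) (hq : q ∈ Ioo (0 : ℝ) 8) :
    SquareD ⊆ OmegaQ q ∪ ((fun z : ℂ => 1 / 2 + Complex.I * (z - 1 / 2)) '' OmegaQ q) := by
  rintro z ⟨h0, h1, hb⟩
  obtain ⟨hq0, hq8⟩ := hq
  rw [lt_min_iff, abs_lt, abs_lt] at hb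
  obtain ⟨⟨hb1, hb2⟩, hb3, hb4⟩ := hb
  rcases lt_or_ge z.re (1/4) with hA | hA
  · -- left cap of the square: in Ω with Re < 1/4
    refine Or.inl (Or.inl ⟨mem_Omega_left (x := 2*z.re) (by linarith) (by linarith) ?_,
      Or.inl hA⟩)
    nlinarith
  rcases lt_or_ge (3/4 : ℝ) z.re with hB | hB
  · -- right cap
    refine Or.inl (Or.inl ⟨mem_Omega_right (x := 2*z.re - 1) (by linarith) (by linarith) ?_,
      Or.inr hB⟩)
    nlinarith
  -- now 1/4 ≤ Re z ≤ 3/4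
  rcases lt_or_ge z.im (-(1/4)) with hC | hC
  · -- bottom cap: use the rotation, preimage has Re < 1/4
    refine Or.inr ⟨(1/2 : ℂ) - Complex.I*(z-1/2), ?_, ?_⟩
    · have hre : ((1/2:ℂ) - Complex.I*(z-1/2)).re = 1/2 + z.im := by simp
      have him : ((1/2:ℂ) - Complex.I*(z-1/2)).im = 1/2 - z.re := by simp
      refine Or.inl ⟨mem_Omega_left (x := 1 + 2*z.im) (by linarith) (by linarith) ?_,
        Or.inl (by rw [hre]; linarith)⟩
      rw [hre, him]
      nlinarith
    · simp only []
      linear_combination (-(z-1/2)) * Complex.I_mul_I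
  rcases lt_or_ge (1/4 : ℝ) z.im with hD | hD
  · -- top cap: use the rotation, preimage has Re > 3/4
    refine Or.inr ⟨(1/2 : ℂ) - Complex.I*(z-1/2), ?_, ?_⟩
    · have hre : ((1/2:ℂ) - Complex.I*(z-1/2)).re = 1/2 + z.im := by simp
      have him : ((1/2:ℂ) - Complex.I*(z-1/2)).im = 1/2 - z.re := by simp
      refine Or.inl ⟨mem_Omega_right (x := 2*z.im) (by linarith) (by linarith) ?_,
        Or.inr (by rw [hre]; linarith)⟩
      rw [hre, him]
      nlinarith
    · simp only []
      linear_combination (-(z-1/2)) * Complex.I_mul_I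
  · -- middle region: |Im z| ≤ 1/4, use Ω ∩ Ell_q
    have key : (z.re - 1/2)^2 + z.im^2 < 1/8 := by
      rcases le_total 0 z.im with hb0 | hb0 <;> rcases le_total z.re (1/2) with ha0 | ha0
      · nlinarith [mul_nonneg hb0 (by linarith : (0:ℝ) ≤ 1/4 - z.im),
          mul_nonneg (by linarith : (0:ℝ) ≤ 1/2 - z.re) (by linarith : (0:ℝ) ≤ z.re - 1/4)]
      · nlinarith [mul_nonneg hb0 (by linarith : (0:ℝ) ≤ 1/4 - z.im),
          mul_nonneg (by linarith : (0:ℝ) ≤ z.re - 1/2) (by linarith : (0:ℝ) ≤ 3/4 - z.re)]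
      · nlinarith [mul_nonneg (by linarith : (0:ℝ) ≤ -z.im) (by linarith : (0:ℝ) ≤ 1/4 + z.im),
          mul_nonneg (by linarith : (0:ℝ) ≤ 1/2 - z.re) (by linarith : (0:ℝ) ≤ z.re - 1/4)]
      · nlinarith [mul_nonneg (by linarith : (0:ℝ) ≤ -z.im) (by linarith : (0:ℝ) ≤ 1/4 + z.im),
          mul_nonneg (by linarith : (0:ℝ) ≤ z.re - 1/2) (by linarith : (0:ℝ) ≤ 3/4 - z.re)]
    refine Or.inl (Or.inr ⟨mem_Omega_left (x := 1/2) (by norm_num) (by norm_num) ?_, ?_⟩)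
    · nlinarith [key]
    · show q * (z.re - 1 / 2) ^ 2 + (16 - q) * z.im ^ 2 < 1
      rcases le_total ((z.re - 1/2)^2) (z.im^2) with h | h
      · -- dominated by im part
        have hble : z.im^2 ≤ 1/16 := by nlinarith
        rcases lt_or_eq_of_le hble with hlt | heq
        · nlinarith [mul_nonneg hq0.le (sub_nonneg.mpr h)]
        · -- z.im = ± 1/4, then (Re z - 1/2)² < 1/16 strictly
          have hz : (z.im - 1/4) * (z.im + 1/4) = 0 := by nlinarith
          have hu : (z.re - 1/2)^2 < 1/16 := by
            rcases mul_eq_zero.mp hz with h' | h'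
            · have : z.im = 1/4 := by linarith
              nlinarith [mul_pos (by linarith : (0:ℝ) < 3/4 - z.re)
                (by linarith : (0:ℝ) < z.re - 1/4)]
            · have : z.im = -(1/4) := by linarith
              nlinarith [mul_pos (by linarith : (0:ℝ) < 3/4 - z.re)
                (by linarith : (0:ℝ) < z.re - 1/4)]
          nlinarith [mul_pos hq0 (show (0:ℝ) < z.im^2 - (z.re - 1/2)^2 by nlinarith)]
      · -- dominated by re part: use q < 8 and key
        nlinarith [key, mul_le_mul_of_nonneg_right hq8.le (sub_nonneg.mpr h)]
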